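/- Let P be positive semidefinite Hermitian, H complex, Σ positive definite Hermitian, and T = P Hᴴ (Σ + H P Hᴴ)⁻¹. Then (I − T H) P is positive semidefinite Hermitian and (I − T H) P ⪯ P in the Loewner order. -/

import Mathlib

open Matrix ComplexOrder

/-- The updated error covariance `(I − T H) P` is positive semidefinite Hermitian
and never exceeds `P` in the Loewner order. -/
theorem oslp_error_covariance_update_psd (K N : ℕ)
    (P : Matrix (Fin K) (Fin K) ℂ) (hP : P.PosSemidef)
    (H : Matrix (Fin N) (Fin K) ℂ)
    (S : Matrix (Fin N) (Fin N) ℂ) (hS : S.PosDef)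
    (T : Matrix (Fin K) (Fin N) ℂ)
    (hT : T = P * Hᴴ * (S + H * P * Hᴴ)⁻¹) :
    ((1 - T * H) * P).PosSemidef ∧ (P - (1 - T * H) * P).PosSemidef := by
  set M := S + H * P * Hᴴ with hM
  have hMpd : M.PosDef := hS.add_posSemidef (hP.mul_mul_conjTranspose_same H)
  haveI : Invertible M := hMpd.isUnit.invertible
  have hkey : ((1 - T * H) * P) = P - (H * P)ᴴ * M⁻¹ * (H * P) := by
    rw [hT]
    simp only [conjTranspose_mul, hP.isHermitian.eq]
    noncomm_ring
    simp [Matrix.mul_assoc]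
  have hblock : (fromBlocks M (H * P) (H * P)ᴴ P).PosSemidef := by
    have h1 : (fromBlocks S 0 (0 : Matrix (Fin K) (Fin N) ℂ) 0).PosSemidef := by
      have : fromBlocks S 0 (0 : Matrix (Fin K) (Fin N) ℂ) 0 =
          (fromRows (1 : Matrix (Fin N) (Fin N) ℂ) (0 : Matrix (Fin K) (Fin N) ℂ)) * S * (fromRows (1 : Matrix (Fin N) (Fin N) ℂ)
            (0 : Matrix (Fin K) (Fin N) ℂ))ᴴ := by
        rw [conjTranspose_fromRows_eq_fromCols_conjTranspose,
          fromRows_mul, fromRows_mul_fromCols]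
        simp
      rw [this]
      exact hS.posSemidef.mul_mul_conjTranspose_same _
    have h2 : (fromBlocks (H * P * Hᴴ) (H * P) (H * P)ᴴ P).PosSemidef := by
      have : fromBlocks (H * P * Hᴴ) (H * P) (H * P)ᴴ P =
          (fromRows H 1) * P * (fromRows H (1 : Matrix (Fin K) (Fin K) ℂ))ᴴ := by
        rw [conjTranspose_fromRows_eq_fromCols_conjTranspose,
          fromRows_mul, fromRows_mul_fromCols]
        simp [conjTranspose_mul, hP.isHermitian.eq, Matrix.mul_assoc]
      rw [this]
      exact hP.mul_mul_conjTranspose_same _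
    have := h1.add h2
    simpa [fromBlocks_add, hM] using this
  have hfirst : ((1 - T * H) * P).PosSemidef := by
    rw [hkey]
    exact ((PosDef.fromBlocks₁₁ (H * P) P hMpd).mp hblock)
  refine ⟨hfirst, ?_⟩
  have : P - (1 - T * H) * P = (P * Hᴴ) * M⁻¹ * (P * Hᴴ)ᴴ := by
    rw [hT]
    simp only [conjTranspose_mul, conjTranspose_conjTranspose, hP.isHermitian.eq]
    noncomm_ring
    simp [Matrix.mul_assoc]
  rw [this]
  exact hMpd.inv.posSemidef.mul_mul_conjTranspose_same _
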